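/- Let t ≥ 0 be a real number and let G be a graph on n ≥ 1 vertices in which every vertex has triangle-degree at least C(t,2). Then e(G) ≥ C(t,2) + δ(n − δ) − C(n − δ − 1, 2), where δ = δ(G) is the minimum degree of G. -/

import Mathlib

open Finset SimpleGraph

/-- Real binomial coefficient `C(y,2) = y(y-1)/2`. -/
noncomputable def rb2 (y : ℝ) : ℝ := y * (y - 1) / 2

/-- The triangle-degree of `v`: the number of triangles of `G` containing `v`. -/
def triangleDeg {V : Type*} [Fintype V] [DecidableEq V]
    (G : SimpleGraph V) [DecidableRel G.Adj] (v : V) : ℕ :=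
  ((G.cliqueFinset 3).filter (fun s => v ∈ s)).card

lemma pair_eq_sym2 {V : Type*} [DecidableEq V] {x y x' y' : V} (hxy : x ≠ y)
    (h : ({x, y} : Finset V) = {x', y'}) : s(x, y) = s(x', y') := by
  rw [Finset.ext_iff] at h
  have h1 := h x; have h2 := h y
  simp only [Finset.mem_insert, Finset.mem_singleton] at h1 h2
  have hx : x = x' ∨ x = y' := by tauto
  have hy : y = x' ∨ y = y' := by tauto
  rw [Sym2.eq_iff]
  rcases hx with hx | hx <;> rcases hy with hy | hy
  · exact absurd (hx.trans hy.symm) hxy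
  · exact Or.inl ⟨hx, hy⟩
  · exact Or.inr ⟨hx, hy⟩
  · exact absurd (hx.trans hy.symm) hxy

set_option maxRecDepth 20000 in
theorem edges_ge_f_minDegree (t : ℝ) (ht : 0 ≤ t)
    (V : Type) [Fintype V] [DecidableEq V] (n : ℕ) (hn : 1 ≤ n)
    (hV : Fintype.card V = n)
    (G : SimpleGraph V) [DecidableRel G.Adj]
    (hdeg : ∀ v : V, rb2 t ≤ (triangleDeg G v : ℝ)) :
    rb2 t + (G.minDegree : ℝ) * ((n : ℝ) - G.minDegree)
        - rb2 ((n : ℝ) - G.minDegree - 1)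
      ≤ (G.edgeFinset.card : ℝ) := by
  have hne : Nonempty V := Fintype.card_pos_iff.mp (by rw [hV]; omega)
  obtain ⟨u, hu⟩ := G.exists_minimal_degree_vertex
  set δ := G.minDegree with hδ
  set N := G.neighborFinset u with hN
  set M := Nᶜ with hM
  have hNcard : N.card = δ := by rw [hN, card_neighborFinset_eq_degree, hu]
  have hδn : δ < n := by rw [hu, ← hV]; exact G.degree_lt_card_verts u
  have hMcard : M.card = n - δ := by rw [hM, Finset.card_compl, hNcard, hV]
  have huM : u ∈ M := by simp [hM, hN]
  set E := G.edgeFinset with hE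
  set g : Sym2 V → ℕ := fun e => (M.filter (· ∈ e)).card with hg
  -- adjacency from membership
  have hadj : ∀ x y : V, s(x,y) ∈ E → G.Adj x y := by
    intro x y h; rwa [hE, mem_edgeFinset, mem_edgeSet] at h
  -- filter of vertices of an edge
  have hfil : ∀ (S : Finset V) (x y : V), S.filter (· ∈ s(x,y)) = S ∩ {x, y} := by
    intro S x y
    ext z; simp [Sym2.mem_iff]
  -- sum swap
  have hsum : ∑ v ∈ M, G.degree v = ∑ e ∈ E, g e := by
    calc ∑ v ∈ M, G.degree v = ∑ v ∈ M, (E.filter (fun e => v ∈ e)).card := by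
          refine Finset.sum_congr rfl fun v _ => ?_
          rw [← card_incidenceFinset_eq_degree, incidenceFinset_eq_filter]
      _ = ∑ v ∈ M, ∑ e ∈ E, if v ∈ e then 1 else 0 :=
          Finset.sum_congr rfl fun v _ => Finset.card_filter _ _
      _ = ∑ e ∈ E, ∑ v ∈ M, if v ∈ e then 1 else 0 := Finset.sum_comm
      _ = ∑ e ∈ E, g e :=
          Finset.sum_congr rfl fun e _ => (Finset.card_filter _ _).symm
  have hdegsum : M.card * δ ≤ ∑ v ∈ M, G.degree v := by
    have := Finset.card_nsmul_le_sum M (fun v => G.degree v) δ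
      (fun v _ => G.minDegree_le_degree v)
    simpa [smul_eq_mul] using this
  -- g ≤ 2 on edges
  have hgle : ∀ e ∈ E, g e ≤ 2 := by
    intro e he
    induction e with
    | h x y =>
      rw [hg]; simp only
      calc (M.filter (· ∈ s(x,y))).card ≤ ({x, y} : Finset V).card := by
            rw [hfil]; exact Finset.card_le_card (Finset.inter_subset_right)
        _ ≤ 2 := Finset.card_insert_le _ _ |>.trans (by simp)
  -- pointwise identity
  have hpt : ∀ e ∈ E, 1 + (if g e = 2 then 1 else 0) = (if g e = 0 then 1 else 0) + g e := by
    intro e he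
    have := hgle e he
    interval_cases h : g e <;> simp
  have hsplit : E.card + (E.filter (fun e => g e = 2)).card
      = (E.filter (fun e => g e = 0)).card + ∑ e ∈ E, g e := by
    have h1 : ∑ e ∈ E, (1 + if g e = 2 then 1 else 0)
        = ∑ e ∈ E, ((if g e = 0 then 1 else 0) + g e) := Finset.sum_congr rfl hpt
    rw [Finset.sum_add_distrib, Finset.sum_add_distrib, Finset.sum_const, smul_eq_mul,
      mul_one, ← Finset.card_filter, ← Finset.card_filter] at h1
    exact h1
  -- Fact C: edges inside M avoid u, so at most (n-δ-1 choose 2) of them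
  have hB2 : (E.filter (fun e => g e = 2)).card ≤ (n - δ - 1).choose 2 := by
    have hcard : ((M.erase u).powersetCard 2).card = (n - δ - 1).choose 2 := by
      rw [Finset.card_powersetCard, Finset.card_erase_of_mem huM, hMcard]
    rw [← hcard]
    apply Finset.card_le_card_of_injOn (fun e => Finset.univ.filter (· ∈ e))
    · intro e he
      rw [Finset.mem_coe, Finset.mem_filter] at he
      obtain ⟨heE, hge⟩ := he
      induction e with
      | h x y =>
        have hadjxy := hadj x y heE
        have hxy : x ≠ y := hadjxy.ne
        have hc2 : ({x, y} : Finset V).card = 2 := by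
          rw [Finset.card_insert_of_notMem (by simp [hxy]), Finset.card_singleton]
        have hsub : M ∩ ({x, y} : Finset V) = {x, y} := by
          apply Finset.eq_of_subset_of_card_le Finset.inter_subset_right
          have : g s(x,y) = (M ∩ ({x,y} : Finset V)).card := by
            rw [hg]; simp only; rw [hfil]
          omega
        have hxM : x ∈ M := Finset.mem_of_mem_inter_left (hsub ▸ (by simp : x ∈ ({x,y}:Finset V)))
        have hyM : y ∈ M := Finset.mem_of_mem_inter_left (hsub ▸ (by simp : y ∈ ({x,y}:Finset V)))
        have hnu : ∀ z w : V, z ∈ M → G.Adj z w → w ≠ u := by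
          intro z w hz hzw hwu
          subst hwu
          have : z ∈ N := by rw [hN, mem_neighborFinset]; exact hzw.symm
          exact (Finset.mem_compl.mp (hM ▸ hz)) this
        have hxu : x ≠ u := hnu y x hyM hadjxy.symm
        have hyu : y ≠ u := hnu x y hxM hadjxy
        rw [Finset.mem_coe, Finset.mem_powersetCard]; beta_reduce
        constructor
        · rw [hfil, Finset.univ_inter]
          intro z hz
          rcases Finset.mem_insert.mp hz with rfl | hz
          · exact Finset.mem_erase.mpr ⟨hxu, hxM⟩
          · rw [Finset.mem_singleton] at hz; subst hz
            exact Finset.mem_erase.mpr ⟨hyu, hyM⟩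
        · rw [hfil, Finset.univ_inter]; exact hc2
    · intro e he e' he' hfe
      rw [Finset.mem_coe, Finset.mem_filter] at he he'
      induction e with
      | h x y =>
        induction e' with
        | h x' y' =>
          have h1 : Finset.univ.filter (· ∈ s(x,y)) = ({x,y} : Finset V) := by
            rw [hfil, Finset.univ_inter]
          have h2 : Finset.univ.filter (· ∈ s(x',y')) = ({x',y'} : Finset V) := by
            rw [hfil, Finset.univ_inter]
          exact pair_eq_sym2 (hadj x y he.1).ne (by rw [← h1, ← h2]; exact hfe)
  -- Fact D: triangles through u inject into edges with both ends in N
  have hT : triangleDeg G u ≤ (E.filter (fun e => g e = 0)).card := by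
    rw [triangleDeg]
    apply Finset.card_le_card_of_surjOn (fun e => insert u (Finset.univ.filter (· ∈ e)))
    intro s hs
    rw [Finset.mem_coe, Finset.mem_filter] at hs
    obtain ⟨hs3, hus⟩ := hs
    rw [SimpleGraph.mem_cliqueFinset_iff] at hs3
    obtain ⟨hclique, hcard⟩ := hs3
    have h2 : (s.erase u).card = 2 := by rw [Finset.card_erase_of_mem hus, hcard]
    obtain ⟨a, b, hab, hentries⟩ := Finset.card_eq_two.mp h2
    have haS : a ∈ s.erase u := hentries ▸ (by simp : a ∈ ({a,b} : Finset V))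
    have hbS : b ∈ s.erase u := hentries ▸ (by simp : b ∈ ({a,b} : Finset V))
    have hau : a ≠ u := (Finset.mem_erase.mp haS).1
    have hbu : b ≠ u := (Finset.mem_erase.mp hbS).1
    have haS' : a ∈ s := Finset.mem_of_mem_erase haS
    have hbS' : b ∈ s := Finset.mem_of_mem_erase hbS
    have hGab : G.Adj a b := hclique haS' hbS' hab
    have hGua : G.Adj u a := hclique hus haS' (Ne.symm hau)
    have hGub : G.Adj u b := hclique hus hbS' (Ne.symm hbu)
    rw [Set.mem_image]
    refine ⟨s(a,b), ?_, ?_⟩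
    · rw [Finset.mem_coe, Finset.mem_filter]
      refine ⟨by rw [hE, mem_edgeFinset, mem_edgeSet]; exact hGab, ?_⟩
      rw [hg]; simp only; rw [hfil, Finset.card_eq_zero, Finset.eq_empty_iff_forall_notMem]
      intro z hz
      obtain ⟨hzM, hzab⟩ := Finset.mem_inter.mp hz
      have hzN : z ∈ N := by
        rw [hN, mem_neighborFinset]
        rcases Finset.mem_insert.mp hzab with rfl | hz'
        · exact hGua
        · rw [Finset.mem_singleton] at hz'; subst hz'; exact hGub
      exact (Finset.mem_compl.mp (hM ▸ hzM)) hzN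
    · show insert u (Finset.univ.filter (· ∈ s(a,b))) = s
      rw [hfil, Finset.univ_inter, ← hentries, Finset.insert_erase hus]
  -- Assembly
  have hA : rb2 t ≤ ((E.filter (fun e => g e = 0)).card : ℝ) :=
    (hdeg u).trans (by exact_mod_cast hT)
  have hS : (n - δ) * δ ≤ ∑ e ∈ E, g e := by rw [← hsum, ← hMcard]; exact hdegsum
  have hc1 : ((n - δ : ℕ) : ℝ) = (n : ℝ) - δ := by
    rw [Nat.cast_sub hδn.le]
  have hc2 : ((n - δ - 1 : ℕ) : ℝ) = (n : ℝ) - δ - 1 := by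
    rw [Nat.cast_sub (by omega : 1 ≤ n - δ), Nat.cast_sub hδn.le]; norm_num
  have hrb : rb2 ((n : ℝ) - δ - 1) = ((n - δ - 1).choose 2 : ℝ) := by
    rw [Nat.cast_choose_two, hc2, rb2]
  have hsplitR : (E.card : ℝ) + ((E.filter (fun e => g e = 2)).card : ℝ)
      = ((E.filter (fun e => g e = 0)).card : ℝ) + ((∑ e ∈ E, g e : ℕ) : ℝ) := by
    exact_mod_cast congrArg (Nat.cast : ℕ → ℝ) hsplit
  have hSR : ((n - δ : ℕ) : ℝ) * (δ : ℝ) ≤ ((∑ e ∈ E, g e : ℕ) : ℝ) := by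
    exact_mod_cast hS
  have hB2R : ((E.filter (fun e => g e = 2)).card : ℝ) ≤ (((n - δ - 1).choose 2 : ℕ) : ℝ) := by
    exact_mod_cast hB2
  rw [hrb]
  rw [hc1] at hSR
  linarith
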